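/- Let H be a complex Hilbert space, 𝒱 and 𝒲 closed subspaces with H = 𝒱 ⊕ 𝒲ᗮ, and P = π_{𝒱,𝒲ᗮ}. Let (W,w) be a fusion frame for 𝒲 with synthesis operator T_W, let (V,v) be a fusion frame for 𝒱 with synthesis operator T_V, and let Q : K_W → K_V be a bounded operator with T_V Q T_W* = P (an oblique Q-dual fusion frame pair). Let ε ≥ 0, f ∈ H, and f_r ∈ 𝒱 be such that ‖T_W* f_r − T_W* f‖ ≤ ε ‖f‖. Then ‖f_r − P f‖ ≤ ε ‖T_V ∘ Q‖ ‖f‖. -/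

import Mathlib

open scoped ENNReal
set_option synthInstance.maxHeartbeats 1000000
set_option maxHeartbeats 1000000
noncomputable section

/-- Error bound for consistent reconstruction with an (exact) oblique `Q`-dual fusion frame:
if `T_V Q T_W* = P` and `f_r ∈ 𝒱` satisfies `‖T_W* f_r − T_W* f‖ ≤ ε ‖f‖`, then
`‖f_r − P f‖ ≤ ε ‖T_V ∘ Q‖ ‖f‖`. -/
theorem consistent_reconstruction_error_bound
    {H : Type*} [NormedAddCommGroup H] [InnerProductSpace ℂ H] [CompleteSpace H]
    {I : Type*} [Countable I]
    (𝒱 𝒲 : Submodule ℂ H) [CompleteSpace 𝒱] [CompleteSpace 𝒲]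
    (P : H →L[ℂ] H) (hPidem : P ∘L P = P)
    (hPran : LinearMap.range (P : H →ₗ[ℂ] H) = 𝒱) (hPker : LinearMap.ker (P : H →ₗ[ℂ] H) = 𝒲ᗮ)
    (W : I → Submodule ℂ H) [∀ i, CompleteSpace (W i)] (hW : ∀ i, W i ≤ 𝒲)
    (w : I → ℝ) (hw : ∀ i, 0 < w i)
    (TW : lp (fun i => W i) 2 →L[ℂ] H)
    (hTW : ∀ g : lp (fun i => W i) 2, HasSum (fun i => (w i : ℂ) • (g i : H)) (TW g))
    (hWfr : LinearMap.range (TW : lp (fun i => W i) 2 →ₗ[ℂ] H) = 𝒲)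
    (V : I → Submodule ℂ H) [∀ i, CompleteSpace (V i)] (hV : ∀ i, V i ≤ 𝒱)
    (v : I → ℝ) (hv : ∀ i, 0 < v i)
    (TV : lp (fun i => V i) 2 →L[ℂ] H)
    (hTV : ∀ g : lp (fun i => V i) 2, HasSum (fun i => (v i : ℂ) • (g i : H)) (TV g))
    (hVfr : LinearMap.range (TV : lp (fun i => V i) 2 →ₗ[ℂ] H) = 𝒱)
    (Q : lp (fun i => W i) 2 →L[ℂ] lp (fun i => V i) 2)
    (hdual : TV ∘L Q ∘L ContinuousLinearMap.adjoint TW = P)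
    (ε : ℝ) (hε : 0 ≤ ε) (f : H) (fr : H) (hfr : fr ∈ 𝒱)
    (hcons : ‖ContinuousLinearMap.adjoint TW fr - ContinuousLinearMap.adjoint TW f‖ ≤ ε * ‖f‖) :
    ‖fr - P f‖ ≤ ε * ‖TV ∘L Q‖ * ‖f‖ := by
  have hPfr : P fr = fr := by
    rw [← hPran] at hfr
    obtain ⟨x, hx⟩ := hfr
    rw [← hx, ContinuousLinearMap.coe_coe, ← ContinuousLinearMap.comp_apply, hPidem]
  have key : fr - P f = (TV ∘L Q) (ContinuousLinearMap.adjoint TW fr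
      - ContinuousLinearMap.adjoint TW f) := by
    rw [map_sub]
    have h1 : ∀ x : H, (TV ∘L Q) (ContinuousLinearMap.adjoint TW x) = P x := by
      intro x
      rw [← hdual]; rfl
    rw [h1, h1, hPfr]
  calc ‖fr - P f‖ = ‖(TV ∘L Q) (ContinuousLinearMap.adjoint TW fr
        - ContinuousLinearMap.adjoint TW f)‖ := by rw [key]
    _ ≤ ‖TV ∘L Q‖ * ‖ContinuousLinearMap.adjoint TW fr - ContinuousLinearMap.adjoint TW f‖ :=
        (TV ∘L Q).le_opNorm _
    _ ≤ ‖TV ∘L Q‖ * (ε * ‖f‖) := by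
        exact mul_le_mul_of_nonneg_left hcons (norm_nonneg (TV ∘L Q))
    _ = ε * ‖TV ∘L Q‖ * ‖f‖ := by ring
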